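/- Let B_μ (μ = 0,1,2,3) be 4×4 real orthogonal matrices satisfying B_μ B_ν + B_ν B_μ = −2 η_{μν} I for all μ,ν. Let m ≥ 0 and p ∈ ℝ³ with p ≠ 0, and set E = √(|p|² + m²), a = √((E+m)/(2E)), b = √((E−m)/(2E)), and G = |p|⁻¹ (Σ_{k=1}^{3} p_k B_k) B₀. Then the 8×8 real block matrix with blocks [[a·I, −b·G],[b·G, a·I]] is orthogonal. -/

import Mathlib

open Matrix

/-- The Minkowski metric `diag(1,-1,-1,-1)` as a real 4×4 matrix. -/
noncomputable def minkowskiEta : Matrix (Fin 4) (Fin 4) ℝ :=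
  Matrix.diagonal ![1, -1, -1, -1]

private lemma half_of_double {M N : Matrix (Fin 4) (Fin 4) ℝ} (h : M + M = (2:ℝ) • N) :
    M = N := by
  have h2 : (2:ℝ) • M = (2:ℝ) • N := by rw [two_smul]; exact h
  exact smul_right_injective _ (by norm_num) h2

private lemma sum_sq (C1 C2 C3 : Matrix (Fin 4) (Fin 4) ℝ)
    (h11 : C1 * C1 = 1) (h22 : C2 * C2 = 1) (h33 : C3 * C3 = 1)
    (h12 : C1 * C2 + C2 * C1 = 0) (h13 : C1 * C3 + C3 * C1 = 0)
    (h23 : C2 * C3 + C3 * C2 = 0) (q1 q2 q3 : ℝ) :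
    (q1 • C1 + q2 • C2 + q3 • C3) * (q1 • C1 + q2 • C2 + q3 • C3)
      = (q1 ^ 2 + q2 ^ 2 + q3 ^ 2) • 1 := by
  have e21 : C2 * C1 = -(C1 * C2) := eq_neg_of_add_eq_zero_left (by rw [add_comm]; exact h12)
  have e31 : C3 * C1 = -(C1 * C3) := eq_neg_of_add_eq_zero_left (by rw [add_comm]; exact h13)
  have e32 : C3 * C2 = -(C2 * C3) := eq_neg_of_add_eq_zero_left (by rw [add_comm]; exact h23)
  simp only [add_mul, mul_add, smul_mul_assoc, mul_smul_comm, h11, h22, h33, e21, e31, e32]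
  module
/-- Given real orthogonal Majorana matrices `B_μ`, a mass `m ≥ 0` and a
nonzero momentum `p ∈ ℝ³`, with `E = √(|p|²+m²)`, `a = √((E+m)/(2E))`,
`b = √((E−m)/(2E))` and `G = |p|⁻¹ (Σ_k p_k B_k) B₀`, the 8×8 block matrix
`[[a·I, −b·G],[b·G, a·I]]` is orthogonal. -/
theorem majorana_fourier_multiplier_orthogonal
    (B : Fin 4 → Matrix (Fin 4) (Fin 4) ℝ)
    (horth : ∀ μ, (B μ)ᵀ * B μ = 1)
    (hB : ∀ μ ν, B μ * B ν + B ν * B μ =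
      (-2 * minkowskiEta μ ν) • (1 : Matrix (Fin 4) (Fin 4) ℝ))
    (m : ℝ) (hm : 0 ≤ m) (p : Fin 3 → ℝ) (hp : p ≠ 0)
    (E a b : ℝ) (G : Matrix (Fin 4) (Fin 4) ℝ)
    (hE : E = Real.sqrt ((∑ k, p k ^ 2) + m ^ 2))
    (ha : a = Real.sqrt ((E + m) / (2 * E)))
    (hb : b = Real.sqrt ((E - m) / (2 * E)))
    (hG : G = (Real.sqrt (∑ k, p k ^ 2))⁻¹ • ((∑ k, p k • B k.succ) * B 0)) :
    (Matrix.fromBlocks (a • (1 : Matrix (Fin 4) (Fin 4) ℝ)) (-(b • G)) (b • G)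
        (a • (1 : Matrix (Fin 4) (Fin 4) ℝ)))ᵀ *
      Matrix.fromBlocks (a • (1 : Matrix (Fin 4) (Fin 4) ℝ)) (-(b • G)) (b • G)
        (a • (1 : Matrix (Fin 4) (Fin 4) ℝ)) = 1 := by
  -- scalar facts
  have hsum_pos : 0 < ∑ k, p k ^ 2 := by
    rcases Function.ne_iff.mp hp with ⟨k, hk⟩
    exact Finset.sum_pos' (fun i _ => sq_nonneg _)
      ⟨k, Finset.mem_univ k, pow_two_pos_of_ne_zero hk⟩
  have hs_pos : 0 < Real.sqrt (∑ k, p k ^ 2) := Real.sqrt_pos.mpr hsum_pos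
  have hs_sq : Real.sqrt (∑ k, p k ^ 2) * Real.sqrt (∑ k, p k ^ 2) = ∑ k, p k ^ 2 :=
    Real.mul_self_sqrt hsum_pos.le
  have hE_pos : 0 < E := by
    rw [hE]
    exact Real.sqrt_pos.mpr (add_pos_of_pos_of_nonneg hsum_pos (sq_nonneg m))
  have hEm : m ≤ E := by
    rw [hE]
    calc m = Real.sqrt (m ^ 2) := by rw [Real.sqrt_sq hm]
    _ ≤ _ := Real.sqrt_le_sqrt (by linarith)
  have ha2 : a * a = (E + m) / (2 * E) := by
    rw [ha]; exact Real.mul_self_sqrt (by positivity)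
  have hb2 : b * b = (E - m) / (2 * E) := by
    rw [hb]; exact Real.mul_self_sqrt (div_nonneg (by linarith) (by linarith))
  have hab : a * a + b * b = 1 := by
    rw [ha2, hb2]; field_simp; ring
  -- matrix algebra facts
  have hB00 : B 0 * B 0 = -1 := by
    apply half_of_double
    have h := hB 0 0
    have he : minkowskiEta 0 0 = 1 := by simp [minkowskiEta]
    rw [he] at h
    rw [h]; rw [show ((-2 : ℝ) * 1) • (1 : Matrix (Fin 4) (Fin 4) ℝ) = (2:ℝ) • (-1) by
      rw [smul_neg]; norm_num]
  have hBkk : ∀ k : Fin 3, B k.succ * B k.succ = 1 := by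
    intro k
    apply half_of_double
    have h := hB k.succ k.succ
    have he : minkowskiEta k.succ k.succ = -1 := by
      fin_cases k <;> simp [minkowskiEta]
    rw [he] at h
    rw [h]; norm_num
  have hB0k : ∀ k : Fin 3, B 0 * B k.succ + B k.succ * B 0 = 0 := by
    intro k
    have h := hB 0 k.succ
    have he : minkowskiEta 0 k.succ = 0 :=
      Matrix.diagonal_apply_ne _ (Fin.succ_ne_zero k).symm
    rw [he] at h
    simpa using h
  have hBjk : ∀ j k : Fin 3, j ≠ k → B j.succ * B k.succ + B k.succ * B j.succ = 0 := by
    intro j k hjk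
    have h := hB j.succ k.succ
    have he : minkowskiEta j.succ k.succ = 0 :=
      Matrix.diagonal_apply_ne _ (fun hc => hjk (Fin.succ_injective _ hc))
    rw [he] at h
    simpa using h
  have hB0T : (B 0)ᵀ = -(B 0) := by
    have h : (B 0)ᵀ * (B 0 * B 0) = B 0 := by
      rw [← Matrix.mul_assoc, horth 0, Matrix.one_mul]
    rw [hB00, Matrix.mul_neg, Matrix.mul_one] at h
    exact neg_eq_iff_eq_neg.mp h
  have hBkT : ∀ k : Fin 3, (B k.succ)ᵀ = B k.succ := by
    intro k
    have h : (B k.succ)ᵀ * (B k.succ * B k.succ) = B k.succ := by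
      rw [← Matrix.mul_assoc, horth k.succ, Matrix.one_mul]
    rwa [hBkk k, Matrix.mul_one] at h
  set S : Matrix (Fin 4) (Fin 4) ℝ := ∑ k, p k • B k.succ with hSdef
  have hST : Sᵀ = S := by
    rw [hSdef, Matrix.transpose_sum]
    exact Finset.sum_congr rfl fun k _ => by rw [Matrix.transpose_smul, hBkT k]
  have hS0 : B 0 * S = -(S * B 0) := by
    rw [hSdef, Finset.mul_sum, Finset.sum_mul, ← Finset.sum_neg_distrib]
    refine Finset.sum_congr rfl fun k _ => ?_
    rw [Matrix.mul_smul, Matrix.smul_mul, ← smul_neg]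
    congr 1
    exact eq_neg_of_add_eq_zero_left (hB0k k)
  have hSS : S * S = (∑ k, p k ^ 2) • 1 := by
    rw [hSdef]
    rw [show (∑ k, p k • B k.succ : Matrix (Fin 4) (Fin 4) ℝ)
        = p 0 • B (0:Fin 3).succ + p 1 • B (1:Fin 3).succ + p 2 • B (2:Fin 3).succ from
      by rw [Fin.sum_univ_three]]
    rw [show (∑ k, p k ^ 2) = p 0 ^ 2 + p 1 ^ 2 + p 2 ^ 2 from Fin.sum_univ_three _]
    exact sum_sq _ _ _ (hBkk 0) (hBkk 1) (hBkk 2)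
      (hBjk 0 1 (by decide)) (hBjk 0 2 (by decide)) (hBjk 1 2 (by decide)) _ _ _
  have hGT : Gᵀ = G := by
    rw [hG, Matrix.transpose_smul, Matrix.transpose_mul, hB0T, hST, Matrix.neg_mul,
      hS0, neg_neg]
  have hGG : G * G = 1 := by
    have h1 : (S * B 0) * (S * B 0) = S * (B 0 * S) * B 0 := by noncomm_ring
    have h2 : S * -(S * B 0) * B 0 = -((S * S) * (B 0 * B 0)) := by noncomm_ring
    have key : (S * B 0) * (S * B 0) = (∑ k, p k ^ 2) • 1 := by
      rw [h1, hS0, h2, hSS, hB00]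
      simp [Matrix.smul_mul]
    rw [hG, Matrix.smul_mul, Matrix.mul_smul, smul_smul, key, smul_smul]
    rw [show (Real.sqrt (∑ k, p k ^ 2))⁻¹ * (Real.sqrt (∑ k, p k ^ 2))⁻¹ * (∑ k, p k ^ 2)
        = 1 from by rw [← hs_sq]; field_simp; rw [Real.sqrt_sq hs_pos.le], one_smul]
  -- block computation
  rw [Matrix.fromBlocks_transpose, Matrix.fromBlocks_multiply]
  rw [show (1 : Matrix (Fin 4 ⊕ Fin 4) (Fin 4 ⊕ Fin 4) ℝ) = Matrix.fromBlocks 1 0 0 1 from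
    (Matrix.fromBlocks_one).symm]
  refine Matrix.fromBlocks_inj.mpr ⟨?_, ?_, ?_, ?_⟩
  · rw [Matrix.transpose_smul, Matrix.transpose_one, Matrix.transpose_smul, hGT,
      Matrix.smul_mul, Matrix.mul_smul, Matrix.one_mul, Matrix.smul_mul, Matrix.mul_smul,
      hGG, smul_smul, smul_smul, ← add_smul, hab, one_smul]
  · simp only [Matrix.transpose_smul, Matrix.transpose_one, hGT, Matrix.mul_neg,
      Matrix.smul_mul, Matrix.mul_smul, Matrix.one_mul, Matrix.mul_one, smul_smul]
    module
  · simp only [Matrix.transpose_neg, Matrix.transpose_smul, Matrix.transpose_one, hGT,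
      Matrix.neg_mul, Matrix.smul_mul, Matrix.mul_smul, Matrix.one_mul, Matrix.mul_one,
      smul_smul]
    module
  · rw [Matrix.transpose_neg, Matrix.transpose_smul, hGT, Matrix.transpose_smul,
      Matrix.transpose_one, Matrix.neg_mul, Matrix.mul_neg, neg_neg,
      Matrix.smul_mul, Matrix.mul_smul, hGG, Matrix.smul_mul, Matrix.mul_smul,
      Matrix.one_mul, smul_smul, smul_smul, ← add_smul,
      show b * b + a * a = 1 from by linarith, one_smul]
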